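/- Let (A, p_A) satisfy the bound Σ_{u∈T,u'∈T'} p_A({A : Au = Au'}) ≤ |T∩T'| + |T||T'|α/|Im A| + min{|T|,|T'|}β for all T,T' ⊆ U^n, and let a be drawn uniformly from Im(A), independent of A. Then for every nonempty T ⊆ U^n: P_{A,a}({(A,a) : T ∩ C_A(a) = ∅}) ≤ α − 1 + |Im A|·(β+1)/|T|. -/

import Mathlib

open Finset
open scoped Classical

/-- Collision probability `p_A({A : Au = Au'})` for an ensemble of functions. -/
noncomputable def collP {𝒜 X B : Type*} [Fintype 𝒜] (p : 𝒜 → ℝ)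
    (F : 𝒜 → X → B) (u u' : X) : ℝ :=
  ∑ a : 𝒜, if F a u = F a u' then p a else 0

/-- Saturation property: with `a` uniform on `Im A` and independent of `A`,
`P({(A,a) : T ∩ C_A(a) = ∅}) ≤ α − 1 + |Im A|(β+1)/|T|`. -/
theorem stmt2 {U B 𝒜 : Type*} [Fintype U] [Fintype B] [Nonempty B] [Fintype 𝒜] (n : ℕ)
    (p : 𝒜 → ℝ) (hp : ∀ a, 0 ≤ p a) (hp1 : ∑ a : 𝒜, p a = 1)
    (F : 𝒜 → (Fin n → U) → B) (α β : ℝ) (hα : 0 ≤ α) (hβ : 0 ≤ β)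
    (hwhash : ∀ T T' : Finset (Fin n → U),
      ∑ u ∈ T, ∑ u' ∈ T', collP p F u u' ≤
        ((T ∩ T').card : ℝ) + (T.card : ℝ) * (T'.card : ℝ) * α / (Fintype.card B : ℝ)
          + (↑(min T.card T'.card) : ℝ) * β)
    (T : Finset (Fin n → U)) (hT : T.Nonempty) :
    ∑ a : 𝒜, ∑ b : B,
        (if ∀ u ∈ T, F a u ≠ b then p a * (1 / (Fintype.card B : ℝ)) else 0) ≤
      α - 1 + (Fintype.card B : ℝ) * (β + 1) / (T.card : ℝ) := by
  set N : ℝ := (Fintype.card B : ℝ) with hNdef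
  set m : ℝ := (T.card : ℝ) with hmdef
  have hNB : 0 < Fintype.card B := Fintype.card_pos
  have hN0 : 0 < N := by rw [hNdef]; exact_mod_cast hNB
  have hm0 : 0 < m := by rw [hmdef]; exact_mod_cast Finset.card_pos.mpr hT
  set X : 𝒜 → B → ℕ := fun a b => (T.filter (fun u => F a u = b)).card with hXdef
  set Z : 𝒜 → ℕ := fun a => (univ.filter (fun b : B => ∀ u ∈ T, F a u ≠ b)).card with hZdef
  set S : 𝒜 → ℝ := fun a => ∑ b : B, (X a b : ℝ)^2 with hSdef
  have hXite : ∀ a b, (X a b : ℝ) = ∑ u ∈ T, if F a u = b then (1:ℝ) else 0 := by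
    intro a b
    rw [Finset.sum_boole]
  have hXsum : ∀ a, ∑ b : B, (X a b : ℝ) = m := by
    intro a
    rw [← Nat.cast_sum]
    have : ∑ b : B, X a b = T.card :=
      (Finset.card_eq_sum_card_fiberwise (fun u _ => Finset.mem_univ (F a u))).symm
    rw [this]
  -- second moment identity
  have hS : ∀ a, S a = ∑ u ∈ T, ∑ u' ∈ T, (if F a u = F a u' then (1:ℝ) else 0) := by
    intro a
    rw [hSdef]
    simp only [sq, hXite, Finset.sum_mul_sum]
    rw [Finset.sum_comm]
    refine Finset.sum_congr rfl fun u _ => ?_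
    rw [Finset.sum_comm]
    refine Finset.sum_congr rfl fun u' _ => ?_
    have key : ∀ b : B, (if F a u = b then (1:ℝ) else 0) * (if F a u' = b then 1 else 0)
        = if b = F a u then (if F a u = F a u' then (1:ℝ) else 0) else 0 := by
      intro b
      by_cases h1 : F a u = b
      · subst h1
        by_cases h2 : F a u = F a u'
        · simp [h2]
        · simp [h2, Ne.symm h2]
      · simp [h1, Ne.symm h1]
    rw [Finset.sum_congr rfl fun b _ => key b, Finset.sum_ite_eq' Finset.univ (F a u)]
    simp
  -- relate weighted second moment to collP
  have hcoll : ∑ a : 𝒜, p a * S a = ∑ u ∈ T, ∑ u' ∈ T, collP p F u u' := by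
    simp only [hS, collP, Finset.mul_sum, mul_ite, mul_one, mul_zero]
    rw [Finset.sum_comm]
    refine Finset.sum_congr rfl fun u _ => ?_
    rw [Finset.sum_comm]
  -- pointwise key inequality: m^2 * (Z a + N) ≤ N^2 * S a
  have hkey : ∀ a, m^2 * ((Z a : ℝ) + N) ≤ N^2 * S a := by
    intro a
    set K : Finset B := univ.filter (fun b : B => ¬ ∀ u ∈ T, F a u ≠ b) with hKdef
    have hKcard : (K.card : ℝ) = N - Z a := by
      have hle : (univ.filter (fun b : B => ∀ u ∈ T, F a u ≠ b)).card ≤ Fintype.card B := by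
        simpa using Finset.card_filter_le (univ : Finset B) _
      rw [hKdef, Finset.filter_not, Finset.card_sdiff_of_subset (Finset.filter_subset _ _)]
      rw [hNdef, hZdef, Finset.card_univ]
      rw [Nat.cast_sub hle]
    have hmK : m = ∑ b ∈ K, (X a b : ℝ) := by
      rw [← hXsum a]
      symm
      apply Finset.sum_subset (Finset.subset_univ K)
      intro b _ hb
      rw [hKdef] at hb
      simp only [Finset.mem_filter, Finset.mem_univ, true_and, not_not] at hb
      have : (T.filter (fun u => F a u = b)) = ∅ := by
        apply Finset.filter_eq_empty_iff.mpr
        intro u hu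
        exact hb u hu
      simp [hXdef, this]
    have hCS : m^2 ≤ (K.card : ℝ) * S a := by
      have h1 : (∑ b ∈ K, (X a b : ℝ))^2 ≤ (K.card : ℝ) * ∑ b ∈ K, (X a b : ℝ)^2 :=
        sq_sum_le_card_mul_sum_sq
      have h2 : ∑ b ∈ K, ((X a b : ℝ))^2 ≤ S a := by
        rw [hSdef]
        exact Finset.sum_le_sum_of_subset_of_nonneg (Finset.subset_univ K)
          (fun b _ _ => sq_nonneg _)
      calc m^2 = (∑ b ∈ K, (X a b : ℝ))^2 := by rw [hmK]
        _ ≤ (K.card : ℝ) * ∑ b ∈ K, (X a b : ℝ)^2 := h1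
        _ ≤ (K.card : ℝ) * S a := mul_le_mul_of_nonneg_left h2 (Nat.cast_nonneg _)
    have hZnn : (0:ℝ) ≤ (Z a : ℝ) := Nat.cast_nonneg _
    have hSnn : 0 ≤ S a := by rw [hSdef]; exact Finset.sum_nonneg fun b _ => sq_nonneg _
    rw [hKcard] at hCS
    have h6 : m^2 * ((Z a : ℝ) + N) ≤ (N - (Z a : ℝ)) * S a * ((Z a : ℝ) + N) :=
      mul_le_mul_of_nonneg_right hCS (add_nonneg hZnn (le_of_lt hN0))
    have h7 : (N - (Z a : ℝ)) * S a * ((Z a : ℝ) + N) = N^2 * S a - (Z a : ℝ)^2 * S a := by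
      ring
    rw [h7] at h6
    have h8 : 0 ≤ (Z a : ℝ)^2 * S a := mul_nonneg (sq_nonneg _) hSnn
    linarith
  -- sum the key inequality
  have hsum : m^2 * (∑ a : 𝒜, p a * (Z a : ℝ)) + m^2 * N ≤ N^2 * ∑ a : 𝒜, p a * S a := by
    have h1 : ∑ a : 𝒜, p a * (m^2 * ((Z a : ℝ) + N)) ≤ ∑ a : 𝒜, p a * (N^2 * S a) :=
      Finset.sum_le_sum fun a _ => mul_le_mul_of_nonneg_left (hkey a) (hp a)
    calc m^2 * (∑ a : 𝒜, p a * (Z a : ℝ)) + m^2 * N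
        = ∑ a : 𝒜, p a * (m^2 * ((Z a : ℝ) + N)) := by
          rw [Finset.mul_sum]
          rw [show m^2 * N = (∑ a : 𝒜, p a) * (m^2 * N) by rw [hp1]; ring,
            Finset.sum_mul, ← Finset.sum_add_distrib]
          exact Finset.sum_congr rfl fun a _ => by ring
      _ ≤ ∑ a : 𝒜, p a * (N^2 * S a) := h1
      _ = N^2 * ∑ a : 𝒜, p a * S a := by rw [Finset.mul_sum]; exact Finset.sum_congr rfl fun a _ => by ring
  -- bound the weighted second moment via hwhash
  have hS2 : ∑ a : 𝒜, p a * S a ≤ m + m * m * α / N + m * β := by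
    rw [hcoll]
    have := hwhash T T
    simpa [Finset.inter_self] using this
  -- rewrite goal LHS
  have hLHS : ∑ a : 𝒜, ∑ b : B,
      (if ∀ u ∈ T, F a u ≠ b then p a * (1 / N) else 0)
      = (∑ a : 𝒜, p a * (Z a : ℝ)) * (1 / N) := by
    rw [Finset.sum_mul]
    refine Finset.sum_congr rfl fun a _ => ?_
    rw [Finset.sum_ite, Finset.sum_const, Finset.sum_const_zero, add_zero, hZdef]
    push_cast
    ring
  rw [hLHS]
  set Q : ℝ := ∑ a : 𝒜, p a * (Z a : ℝ) with hQdef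
  have key : m^2 * Q + m^2 * N ≤ N^2 * m + N * m^2 * α + N^2 * m * β := by
    have : N^2 * (∑ a : 𝒜, p a * S a) ≤ N^2 * (m + m * m * α / N + m * β) :=
      mul_le_mul_of_nonneg_left hS2 (sq_nonneg N)
    have h3 : N^2 * (m + m * m * α / N + m * β) = N^2 * m + N * m^2 * α + N^2 * m * β := by
      field_simp
    linarith [hsum]
  rw [show Q * (1/N) = Q / N by ring, div_le_iff₀ hN0]
  rw [← sub_nonneg]
  have h5 : (α - 1 + N * (β + 1) / m) * N - Q = ((N^2 * m + N * m^2 * α + N^2 * m * β) - (m^2 * Q + m^2 * N)) / m^2 := by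
    field_simp
    ring
  rw [h5]
  exact div_nonneg (by linarith) (sq_nonneg m)
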